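/- Let g : ZMod N → ℂ be a generator such that ⟨g, Π_λ g⟩ ≠ 0 for every λ ∈ (ZMod N)². Then the Gabor system (g_λ)_{λ ∈ (ZMod N)²} allows phase retrieval: for all x, y : ZMod N → ℂ, if |⟨x, g_λ⟩| = |⟨y, g_λ⟩| for every λ ∈ (ZMod N)², then there exists c ∈ ℂ with |c| = 1 and x = c • y. -/

import Mathlib

open Complex Finset

set_option linter.unusedSectionVars false
set_option maxHeartbeats 1000000

/-- `gw N m = ω^m` where `ω = exp(2πi/N)` and `m : ZMod N`. -/
noncomputable def gw (N : ℕ) (m : ZMod N) : ℂ :=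
  Complex.exp (2 * Real.pi * Complex.I * (m.val : ℂ) / (N : ℂ))

/-- Translation operator `(T_p x)(n) = x(n-p)`. -/
def Tr (N : ℕ) (p : ZMod N) (x : ZMod N → ℂ) : ZMod N → ℂ :=
  fun n => x (n - p)

/-- Modulation operator `(M_ℓ x)(n) = ω^{ℓ·n} x(n)`. -/
noncomputable def Md (N : ℕ) (l : ZMod N) (x : ZMod N → ℂ) : ZMod N → ℂ :=
  fun n => gw N (l * n) * x n

/-- Time-frequency shift `Π_{(p,ℓ)} = M_ℓ ∘ T_p`. -/
noncomputable def Pig (N : ℕ) (p l : ZMod N) (x : ZMod N → ℂ) : ZMod N → ℂ :=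
  Md N l (Tr N p x)

/-- Inner product, conjugate linear in the first argument. -/
noncomputable def inn (N : ℕ) [NeZero N] (x y : ZMod N → ℂ) : ℂ :=
  ∑ j : ZMod N, (starRingEnd ℂ) (x j) * y j

section helpers
variable (N : ℕ) [NeZero N]

private lemma gw_eq_pow (m : ZMod N) :
    gw N m = Complex.exp (2 * Real.pi * Complex.I / N) ^ m.val := by
  rw [gw, ← Complex.exp_nat_mul]
  congr 1
  ring

private lemma gw_zero : gw N (0 : ZMod N) = 1 := by
  simp [gw]

private lemma gw_ne_zero (a : ZMod N) : gw N a ≠ 0 := by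
  rw [gw]; exact Complex.exp_ne_zero _

private lemma gw_mul_add (a b : ZMod N) : gw N a * gw N b = gw N (a + b) := by
  have hζ : IsPrimitiveRoot (Complex.exp (2 * Real.pi * Complex.I / N)) N :=
    Complex.isPrimitiveRoot_exp N (NeZero.ne N)
  rw [gw_eq_pow, gw_eq_pow, gw_eq_pow, ← pow_add, ZMod.val_add]
  conv_lhs => rw [← Nat.div_add_mod (a.val + b.val) N]
  rw [pow_add, pow_mul, hζ.pow_eq_one, one_pow, one_mul]

private lemma gw_conj (a : ZMod N) : (starRingEnd ℂ) (gw N a) = gw N (-a) := by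
  have h1 : gw N a * gw N (-a) = 1 := by
    rw [gw_mul_add]; simp [gw_zero]
  have h2 : (starRingEnd ℂ) (gw N a) * gw N a = 1 := by
    rw [gw, ← Complex.exp_conj, ← Complex.exp_add]
    have hz : (starRingEnd ℂ) (2 * Real.pi * Complex.I * (a.val : ℂ) / N)
        = -(2 * Real.pi * Complex.I * (a.val : ℂ) / N) := by
      simp only [map_div₀, map_mul, map_ofNat, Complex.conj_ofReal, Complex.conj_I,
        Complex.conj_natCast]
      ring
    rw [hz, neg_add_cancel, Complex.exp_zero]
  calc (starRingEnd ℂ) (gw N a) = (gw N a)⁻¹ := eq_inv_of_mul_eq_one_left h2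
    _ = gw N (-a) := inv_eq_of_mul_eq_one_right h1

private lemma gw_ne_one {a : ZMod N} (ha : a ≠ 0) : gw N a ≠ 1 := by
  have hζ : IsPrimitiveRoot (Complex.exp (2 * Real.pi * Complex.I / N)) N :=
    Complex.isPrimitiveRoot_exp N (NeZero.ne N)
  rw [gw_eq_pow]
  intro hcon
  have hdvd : N ∣ a.val := (hζ.pow_eq_one_iff_dvd _).mp hcon
  have hv : a.val < N := ZMod.val_lt a
  have hv0 : a.val ≠ 0 := fun h0 => ha ((ZMod.val_eq_zero a).mp h0)
  exact hv0 (Nat.eq_zero_of_dvd_of_lt hdvd hv)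

private lemma gw_sum (a : ZMod N) :
    ∑ l : ZMod N, gw N (l * a) = if a = 0 then (N : ℂ) else 0 := by
  split_ifs with h
  · subst h
    simp [gw_zero, Finset.card_univ, ZMod.card]
  · have h1 : gw N a ≠ 1 := gw_ne_one N h
    have hshift : ∑ l : ZMod N, gw N ((l + 1) * a) = ∑ l : ZMod N, gw N (l * a) :=
      Fintype.sum_equiv (Equiv.addRight 1) _ _ (fun l => rfl)
    have h2 : ∑ l : ZMod N, gw N (l * a) = gw N a * ∑ l : ZMod N, gw N (l * a) := by
      calc ∑ l : ZMod N, gw N (l * a) = ∑ l : ZMod N, gw N ((l + 1) * a) := hshift.symm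
        _ = ∑ l : ZMod N, gw N a * gw N (l * a) := by
            refine Finset.sum_congr rfl fun l _ => ?_
            rw [gw_mul_add]; congr 1; ring
        _ = gw N a * ∑ l : ZMod N, gw N (l * a) := by rw [Finset.mul_sum]
    have h3 : (gw N a - 1) * ∑ l : ZMod N, gw N (l * a) = 0 := by
      linear_combination -h2
    rcases mul_eq_zero.mp h3 with h4 | h4
    · exact absurd (sub_eq_zero.mp h4) h1
    · exact h4

private lemma key1 (g x : ZMod N → ℂ) (q m : ZMod N) :
    (∑ p : ZMod N, ∑ l : ZMod N,
        gw N (m * p - l * q) *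
          ((starRingEnd ℂ) (inn N x (Pig N p l g)) * inn N x (Pig N p l g)))
      = (N : ℂ) * gw N (-(m * q)) * inn N g (Pig N (-q) (-m) g) *
          ∑ n : ZMod N, x (n - q) * (starRingEnd ℂ) (x n) * gw N (m * n) := by
  have expand : ∀ p l : ZMod N,
      gw N (m * p - l * q) *
          ((starRingEnd ℂ) (inn N x (Pig N p l g)) * inn N x (Pig N p l g))
        = ∑ n' : ZMod N, ∑ n : ZMod N,
            (gw N (m * p) * (x n' * (starRingEnd ℂ) (g (n' - p)) *
              ((starRingEnd ℂ) (x n) * g (n - p)))) * gw N (l * (n - n' - q)) := by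
    intro p l
    simp only [inn, Pig, Md, Tr, map_sum, map_mul, Complex.conj_conj, gw_conj]
    rw [Finset.sum_mul_sum, Finset.mul_sum]
    refine Finset.sum_congr rfl fun n' _ => ?_
    rw [Finset.mul_sum]
    refine Finset.sum_congr rfl fun n _ => ?_
    have e : gw N (m * p - l * q) * (gw N (-(l * n')) * gw N (l * n))
        = gw N (m * p) * gw N (l * (n - n' - q)) := by
      rw [gw_mul_add, gw_mul_add, gw_mul_add]; congr 1; ring
    linear_combination
      (x n' * (starRingEnd ℂ) (g (n' - p)) * ((starRingEnd ℂ) (x n) * g (n - p))) * e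
  calc
    (∑ p : ZMod N, ∑ l : ZMod N,
        gw N (m * p - l * q) *
          ((starRingEnd ℂ) (inn N x (Pig N p l g)) * inn N x (Pig N p l g)))
      = ∑ p : ZMod N, ∑ l : ZMod N, ∑ n' : ZMod N, ∑ n : ZMod N,
            (gw N (m * p) * (x n' * (starRingEnd ℂ) (g (n' - p)) *
              ((starRingEnd ℂ) (x n) * g (n - p)))) * gw N (l * (n - n' - q)) :=
        Finset.sum_congr rfl fun p _ => Finset.sum_congr rfl fun l _ => expand p l
    _ = ∑ p : ZMod N, ∑ n' : ZMod N, ∑ n : ZMod N, ∑ l : ZMod N,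
            (gw N (m * p) * (x n' * (starRingEnd ℂ) (g (n' - p)) *
              ((starRingEnd ℂ) (x n) * g (n - p)))) * gw N (l * (n - n' - q)) := by
        refine Finset.sum_congr rfl fun p _ => ?_
        rw [Finset.sum_comm]
        exact Finset.sum_congr rfl fun n' _ => Finset.sum_comm
    _ = ∑ p : ZMod N, ∑ n' : ZMod N, ∑ n : ZMod N,
            (gw N (m * p) * (x n' * (starRingEnd ℂ) (g (n' - p)) *
              ((starRingEnd ℂ) (x n) * g (n - p)))) *
              (if n - n' - q = 0 then (N : ℂ) else 0) := by
        refine Finset.sum_congr rfl fun p _ => Finset.sum_congr rfl fun n' _ =>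
          Finset.sum_congr rfl fun n _ => ?_
        rw [← Finset.mul_sum, gw_sum]
    _ = ∑ p : ZMod N, ∑ n : ZMod N, ∑ n' : ZMod N,
            (gw N (m * p) * (x n' * (starRingEnd ℂ) (g (n' - p)) *
              ((starRingEnd ℂ) (x n) * g (n - p)))) *
              (if n - n' - q = 0 then (N : ℂ) else 0) := by
        exact Finset.sum_congr rfl fun p _ => Finset.sum_comm
    _ = ∑ p : ZMod N, ∑ n : ZMod N,
            (gw N (m * p) * (x (n - q) * (starRingEnd ℂ) (g (n - q - p)) *
              ((starRingEnd ℂ) (x n) * g (n - p)))) * (N : ℂ) := by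
        refine Finset.sum_congr rfl fun p _ => Finset.sum_congr rfl fun n _ => ?_
        rw [Finset.sum_eq_single (n - q)]
        · rw [if_pos (by ring)]
        · intro n' _ hne
          rw [if_neg, mul_zero]
          intro h0
          exact hne (by linear_combination -h0)
        · intro h; exact absurd (Finset.mem_univ _) h
    _ = ∑ n : ZMod N, ∑ k : ZMod N,
            (N : ℂ) * (gw N (m * (n - k)) * (x (n - q) * (starRingEnd ℂ) (g (k - q)) *
              ((starRingEnd ℂ) (x n) * g k))) := by
        rw [Finset.sum_comm]
        refine Finset.sum_congr rfl fun n _ => ?_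
        refine Fintype.sum_equiv (Equiv.subLeft n) _ _ fun p => ?_
        simp only [Equiv.subLeft_apply]
        rw [show n - (n - p) = p by ring, show (n - p) - q = n - q - p by ring]
        ring
    _ = (N : ℂ) * gw N (-(m * q)) * inn N g (Pig N (-q) (-m) g) *
          ∑ n : ZMod N, x (n - q) * (starRingEnd ℂ) (x n) * gw N (m * n) := by
        rw [inn]
        simp only [Pig, Md, Tr]
        rw [Finset.mul_sum]
        refine Finset.sum_congr rfl fun n _ => ?_
        rw [Finset.mul_sum, Finset.sum_mul]
        refine Fintype.sum_equiv (Equiv.subRight q) _ _ fun k => ?_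
        simp only [Equiv.subRight_apply]
        rw [show k - q - -q = k by ring]
        have e : gw N (-(m * q)) * gw N (-m * (k - q)) * gw N (m * n)
            = gw N (m * (n - k)) := by
          rw [gw_mul_add, gw_mul_add]; congr 1; ring
        linear_combination
          (-(N : ℂ) * x (n - q) * (starRingEnd ℂ) (g (k - q)) * (starRingEnd ℂ) (x n) * g k) * e

private lemma key2 (x : ZMod N → ℂ) (q s : ZMod N) :
    ∑ m : ZMod N, gw N (-(m * s)) *
        ∑ n : ZMod N, x (n - q) * (starRingEnd ℂ) (x n) * gw N (m * n)
      = (N : ℂ) * (x (s - q) * (starRingEnd ℂ) (x s)) := by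
  calc
    ∑ m : ZMod N, gw N (-(m * s)) *
        ∑ n : ZMod N, x (n - q) * (starRingEnd ℂ) (x n) * gw N (m * n)
      = ∑ m : ZMod N, ∑ n : ZMod N,
          (x (n - q) * (starRingEnd ℂ) (x n)) * gw N (m * (n - s)) := by
        refine Finset.sum_congr rfl fun m _ => ?_
        rw [Finset.mul_sum]
        refine Finset.sum_congr rfl fun n _ => ?_
        have e : gw N (-(m * s)) * gw N (m * n) = gw N (m * (n - s)) := by
          rw [gw_mul_add]; congr 1; ring
        linear_combination (x (n - q) * (starRingEnd ℂ) (x n)) * e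
    _ = ∑ n : ZMod N, (x (n - q) * (starRingEnd ℂ) (x n)) *
          ∑ m : ZMod N, gw N (m * (n - s)) := by
        rw [Finset.sum_comm]
        exact Finset.sum_congr rfl fun n _ => (Finset.mul_sum _ _ _).symm
    _ = ∑ n : ZMod N, (x (n - q) * (starRingEnd ℂ) (x n)) *
          (if n - s = 0 then (N : ℂ) else 0) := by
        exact Finset.sum_congr rfl fun n _ => by rw [gw_sum]
    _ = (N : ℂ) * (x (s - q) * (starRingEnd ℂ) (x s)) := by
        rw [Finset.sum_eq_single s]
        · rw [if_pos (by ring)]; ring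
        · intro n _ hne
          rw [if_neg, mul_zero]
          intro h0
          exact hne (by linear_combination h0)
        · intro h; exact absurd (Finset.mem_univ _) h

end helpers

/-- If `⟨g, Π_λ g⟩ ≠ 0` for all `λ`, the full Gabor system allows phase retrieval. -/
theorem Gabor_phase_retrieval (N : ℕ) [NeZero N] (g : ZMod N → ℂ)
    (hg : ∀ p l : ZMod N, inn N g (Pig N p l g) ≠ 0) :
    ∀ x y : ZMod N → ℂ,
      (∀ p l : ZMod N,
        ‖inn N x (Pig N p l g)‖ = ‖inn N y (Pig N p l g)‖) →
      ∃ c : ℂ, ‖c‖ = 1 ∧ x = c • y := by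
  intro x y h
  have hNe : (N : ℂ) ≠ 0 := Nat.cast_ne_zero.mpr (NeZero.ne N)
  have hQ : ∀ p l : ZMod N,
      (starRingEnd ℂ) (inn N x (Pig N p l g)) * inn N x (Pig N p l g)
        = (starRingEnd ℂ) (inn N y (Pig N p l g)) * inn N y (Pig N p l g) := by
    intro p l
    have e : ∀ z : ℂ, (starRingEnd ℂ) z * z = ((‖z‖ : ℝ) : ℂ) ^ 2 := by
      intro z
      rw [mul_comm, Complex.mul_conj, Complex.normSq_eq_norm_sq]
      push_cast
      ring
    rw [e, e, h p l]
  have hC : ∀ q m : ZMod N,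
      (∑ n : ZMod N, x (n - q) * (starRingEnd ℂ) (x n) * gw N (m * n))
        = ∑ n : ZMod N, y (n - q) * (starRingEnd ℂ) (y n) * gw N (m * n) := by
    intro q m
    have hS : (∑ p : ZMod N, ∑ l : ZMod N,
          gw N (m * p - l * q) *
            ((starRingEnd ℂ) (inn N x (Pig N p l g)) * inn N x (Pig N p l g)))
        = ∑ p : ZMod N, ∑ l : ZMod N,
            gw N (m * p - l * q) *
              ((starRingEnd ℂ) (inn N y (Pig N p l g)) * inn N y (Pig N p l g)) :=
      Finset.sum_congr rfl fun p _ => Finset.sum_congr rfl fun l _ => by rw [hQ p l]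
    have h12 := (key1 N g x q m).symm.trans (hS.trans (key1 N g y q m))
    have hA : (N : ℂ) * gw N (-(m * q)) * inn N g (Pig N (-q) (-m) g) ≠ 0 :=
      mul_ne_zero (mul_ne_zero hNe (gw_ne_zero N _)) (hg _ _)
    exact mul_left_cancel₀ hA h12
  have hE : ∀ a b : ZMod N,
      x a * (starRingEnd ℂ) (x b) = y a * (starRingEnd ℂ) (y b) := by
    intro a b
    have hsum : (∑ m : ZMod N, gw N (-(m * b)) *
          ∑ n : ZMod N, x (n - (b - a)) * (starRingEnd ℂ) (x n) * gw N (m * n))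
        = ∑ m : ZMod N, gw N (-(m * b)) *
            ∑ n : ZMod N, y (n - (b - a)) * (starRingEnd ℂ) (y n) * gw N (m * n) :=
      Finset.sum_congr rfl fun m _ => by rw [hC (b - a) m]
    have h12 := (key2 N x (b - a) b).symm.trans (hsum.trans (key2 N y (b - a) b))
    have h3 := mul_left_cancel₀ hNe h12
    rwa [show b - (b - a) = a by ring] at h3
  have hnormSq : ∀ a : ZMod N, Complex.normSq (x a) = Complex.normSq (y a) := by
    intro a
    have h0 := hE a a
    rw [Complex.mul_conj, Complex.mul_conj] at h0
    exact_mod_cast h0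
  by_cases hy : ∀ b : ZMod N, y b = 0
  · refine ⟨1, by simp, funext fun a => ?_⟩
    have h0 : Complex.normSq (x a) = 0 := by
      rw [hnormSq a, hy a, map_zero]
    have hx0 : x a = 0 := Complex.normSq_eq_zero.mp h0
    simp [hx0, hy a]
  · push_neg at hy
    obtain ⟨b, hb⟩ := hy
    have hxb : x b ≠ 0 := by
      intro h0
      apply hb
      apply Complex.normSq_eq_zero.mp
      rw [← hnormSq b, h0, map_zero]
    have hcb : (starRingEnd ℂ) (x b) ≠ 0 := by simpa using hxb
    refine ⟨x b / y b, ?_, funext fun a => ?_⟩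
    · rw [norm_div, div_eq_one_iff_eq (by simpa using hb)]
      have h1 : ‖x b‖ ^ 2 = ‖y b‖ ^ 2 := by
        rw [Complex.sq_norm, Complex.sq_norm, hnormSq b]
      nlinarith [norm_nonneg (x b), norm_nonneg (y b)]
    · have h0 := hE a b
      have hmc := hE b b
      simp only [Pi.smul_apply, smul_eq_mul]
      rw [div_mul_eq_mul_div, eq_div_iff hb]
      apply mul_right_cancel₀ hcb
      linear_combination y b * h0 - y a * hmc
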